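/- Let H, H' be Hilbert spaces, K : H → H' a compact linear operator, and for α > 0 let R_α := (K*K + αI)⁻¹K*. Then for every z ∈ H, ‖K R_α K z − K z‖ ≤ (√α / 2) ‖z‖. -/

import Mathlib

/-- for `K` compact and `R_α = (K*K + αI)⁻¹K*`, one has
`‖K R_α K z − K z‖ ≤ (√α / 2)‖z‖` for every `z`. -/
theorem stmt10 {H H' : Type*}
    [NormedAddCommGroup H] [InnerProductSpace ℂ H] [CompleteSpace H]
    [NormedAddCommGroup H'] [InnerProductSpace ℂ H'] [CompleteSpace H']
    (K : H →L[ℂ] H') (hcpt : IsCompactOperator K)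
    (α : ℝ) (hα : 0 < α) (R : H' →L[ℂ] H)
    (hR : ∀ z : H', (ContinuousLinearMap.adjoint K) (K (R z)) + (α : ℂ) • R z
        = (ContinuousLinearMap.adjoint K) z) :
    ∀ z : H, ‖K (R (K z)) - K z‖ ≤ (Real.sqrt α / 2) * ‖z‖ := by
  intro z
  set u : H := R (K z) - z with hu
  have hKu : K (R (K z)) - K z = K u := by rw [hu, map_sub]
  rw [hKu]
  -- the key identity: K*K u + α u = -α z
  have key : (ContinuousLinearMap.adjoint K) (K u) + (α : ℂ) • u = -(α : ℂ) • z := by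
    have := hR (K z)
    rw [hu]
    simp only [map_sub, smul_sub]
    rw [sub_add_sub_comm, this]
    ring_nf
    simp [sub_eq_add_neg, neg_smul]
  -- take inner product with u
  have hinner : (inner ℂ u ((ContinuousLinearMap.adjoint K) (K u) + (α : ℂ) • u) : ℂ)
      = inner ℂ u ((-(α : ℂ)) • z) := by rw [key]
  have h1 : (‖K u‖ : ℂ)^2 + (α : ℂ) * (‖u‖ : ℂ)^2 = -(α : ℂ) * (inner ℂ u z : ℂ) := by
    rw [inner_add_right, inner_smul_right, inner_smul_right,
      ContinuousLinearMap.adjoint_inner_right] at hinner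
    rw [← hinner, inner_self_eq_norm_sq_to_K, inner_self_eq_norm_sq_to_K]
    simp only [show ∀ r : ℝ, (RCLike.ofReal r : ℂ) = Complex.ofReal r from fun _ => rfl]
  -- real parts
  have h2 : ‖K u‖^2 + α * ‖u‖^2 = -α * (inner ℂ u z : ℂ).re := by
    have := congrArg Complex.re h1
    simpa [Complex.add_re, Complex.mul_re, Complex.ofReal_re, Complex.ofReal_im,
      ← Complex.ofReal_pow] using this
  have hcs : (inner ℂ u z : ℂ).re ≥ -(‖u‖ * ‖z‖) := by
    have habs := norm_inner_le_norm (𝕜 := ℂ) u z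
    have hre : |(inner ℂ u z : ℂ).re| ≤ ‖u‖ * ‖z‖ := by
      refine le_trans ?_ habs
      exact Complex.abs_re_le_norm _
    simpa using (abs_le.mp hre).1
  have h3 : ‖K u‖^2 + α * ‖u‖^2 ≤ α * (‖u‖ * ‖z‖) := by
    rw [h2]; nlinarith [hα.le]
  have h4 : ‖K u‖^2 ≤ α * ‖z‖^2 / 4 := by
    nlinarith [norm_nonneg u, norm_nonneg z, hα.le, sq_nonneg (‖u‖ - ‖z‖/2)]
  have h5 : (Real.sqrt α / 2 * ‖z‖)^2 = α * ‖z‖^2 / 4 := by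
    rw [mul_pow, div_pow, Real.sq_sqrt hα.le]; ring
  have h6 : 0 ≤ Real.sqrt α / 2 * ‖z‖ := by positivity
  nlinarith [norm_nonneg (K u)]
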